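/- For any z ∈ ℂ and ξ ∈ [-1,1], the integral of the derivative of the right Radau polynomial against the exponential kernel satisfies ((-1)^{p+1}/2) ∫_{-1}^ξ e^{(z/2)(ξ-s)} (R⁻_{p+1})'(s) ds = −e^{(z/2)(ξ+1)} + ((-1)^{p+1}/2) ∑_{k=0}^∞ (z/2)^k R⁻⁽⁻ᵏ⁾_{p+1}(ξ), where the series converges absolutely. -/

import Mathlib

open Polynomial intervalIntegral

/-- The `k`-th Legendre polynomial, defined via the Rodrigues formula. -/
noncomputable def leg (k : ℕ) : Polynomial ℝ :=
  C (1 / (2 ^ k * (k.factorial : ℝ))) * (fun q => derivative q)^[k] ((X ^ 2 - 1) ^ k)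

/-- The right Radau polynomial `R⁻_{p+1} = P_{p+1} - P_p`. -/
noncomputable def radau (p : ℕ) : Polynomial ℝ := leg (p + 1) - leg p

/-- Iterated antiderivatives of the right Radau polynomial, with base point `-1`. -/
noncomputable def radauIter (p : ℕ) : ℕ → ℝ → ℝ
  | 0 => fun ξ => (radau p).eval ξ
  | (k + 1) => fun ξ => ∫ s in (-1 : ℝ)..ξ, radauIter p k s

lemma leg_eval_neg_one (k : ℕ) : (leg k).eval (-1) = (-1) ^ k := by
  have hfac : ((X : ℝ[X]) ^ 2 - 1) ^ k = (X - C 1) ^ k * (X + C 1) ^ k := by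
    rw [← mul_pow, C_1]; ring
  rw [leg, hfac]
  have : (fun q : ℝ[X] => derivative q)^[k] ((X - C 1) ^ k * (X + C 1) ^ k)
      = derivative^[k] ((X - C 1) ^ k * (X + C 1) ^ k) := rfl
  rw [this, Polynomial.iterate_derivative_mul]
  rw [eval_mul, eval_C, eval_finset_sum]
  have hterm : ∀ j ∈ Finset.range (k+1),
      (((k.choose j) • (derivative^[k - j] (((X:ℝ[X]) - C 1)^k) * derivative^[j] (((X:ℝ[X]) + C 1)^k))).eval (-1) : ℝ)
      = if j = k then (k.factorial : ℝ) * (-2)^k else 0 := by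
    intro j hj
    rw [Finset.mem_range, Nat.lt_succ_iff] at hj
    rw [eval_smul, eval_mul]
    rw [Polynomial.iterate_derivative_X_add_pow]
    rw [eval_smul, eval_pow, eval_add, eval_X, eval_C]
    rcases eq_or_lt_of_le hj with h | h
    · subst h
      simp only [Nat.descFactorial_self, Nat.sub_self, pow_zero, smul_eq_mul, mul_one,
        Function.iterate_zero_apply, eval_pow, eval_sub, eval_X, eval_C, if_pos rfl,
        nsmul_eq_mul]
      have : (-1 : ℝ) - 1 = -2 := by ring
      rw [this, if_pos trivial, Nat.choose_self]; ring
    · rw [if_neg h.ne]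
      have : (-1 : ℝ) + 1 = 0 := by ring
      rw [this, zero_pow (by omega)]; simp
  rw [Finset.sum_congr rfl hterm, Finset.sum_ite_eq' _ k, if_pos (Finset.self_mem_range_succ k)]
  have h2 : (2 : ℝ) ^ k ≠ 0 := by positivity
  have hf : (k.factorial : ℝ) ≠ 0 := Nat.cast_ne_zero.2 k.factorial_ne_zero
  rw [show ((-2:ℝ))^k = (-1)^k * 2^k by rw [show (-2:ℝ) = -1*2 by ring, mul_pow]]
  field_simp

lemma radau_eval_neg_one (p : ℕ) : (radau p).eval (-1) = 2 * (-1) ^ (p + 1) := by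
  simp only [radau, eval_sub, leg_eval_neg_one]
  rw [pow_succ]; ring

lemma radauIter_cont (p : ℕ) : ∀ k, Continuous (radauIter p k) := by
  intro k
  induction k with
  | zero => exact (radau p).continuous_aeval
  | succ k ih =>
    show Continuous fun ξ => ∫ s in (-1 : ℝ)..ξ, radauIter p k s
    exact intervalIntegral.continuous_primitive (fun a b => ih.intervalIntegrable a b) (-1)

lemma radauIter_bound (p : ℕ) {M : ℝ} (hM0 : 0 ≤ M)
    (hM : ∀ t ∈ Set.Icc (-1 : ℝ) 2, |(radau p).eval t| ≤ M) :
    ∀ k, ∀ t ∈ Set.Icc (-1 : ℝ) 2, |radauIter p k t| ≤ M * (t + 1) ^ k / k.factorial := by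
  intro k
  induction k with
  | zero => intro t ht; simpa [radauIter] using hM t ht
  | succ k ih =>
    intro t ht
    obtain ⟨ht1, ht2⟩ := ht
    have h1 : |radauIter p (k + 1) t| ≤ ∫ s in (-1 : ℝ)..t, |radauIter p k s| := by
      exact intervalIntegral.abs_integral_le_integral_abs ht1
    have h2 : (∫ s in (-1 : ℝ)..t, |radauIter p k s|)
        ≤ ∫ s in (-1 : ℝ)..t, M * (s + 1) ^ k / k.factorial := by
      apply intervalIntegral.integral_mono_on ht1
      · exact ((radauIter_cont p k).abs.intervalIntegrable _ _)
      · apply Continuous.intervalIntegrable; fun_prop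
      · intro s hs
        exact ih s ⟨hs.1, hs.2.trans ht2⟩
    have h3 : (∫ s in (-1 : ℝ)..t, M * (s + 1) ^ k / k.factorial)
        = M * (t + 1) ^ (k + 1) / (k + 1).factorial := by
      have : ∀ s : ℝ, M * (s + 1) ^ k / k.factorial
          = (M / k.factorial) * (s + 1) ^ k := by intro s; ring
      simp_rw [this]
      rw [intervalIntegral.integral_const_mul]
      have := intervalIntegral.integral_comp_add_right (a := (-1:ℝ)) (b := t)
        (fun u => u ^ k) 1
      rw [this, integral_pow]
      have hne : ((k : ℝ) + 1) ≠ 0 := by positivity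
      rw [Nat.factorial_succ]
      have h0 : (-1:ℝ) + 1 = 0 := by ring
      rw [h0, zero_pow (Nat.succ_ne_zero k), sub_zero]
      have hf : (k.factorial : ℝ) ≠ 0 := Nat.cast_ne_zero.2 k.factorial_ne_zero
      push_cast
      field_simp
    calc |radauIter p (k + 1) t| ≤ _ := h1
      _ ≤ _ := h2
      _ = _ := h3
theorem radau_integral_series (p : ℕ) (z : ℂ) (ξ : ℝ) (hξ : ξ ∈ Set.Icc (-1 : ℝ) 1) :
    Summable (fun k : ℕ => ‖(z / 2) ^ k * (radauIter p k ξ : ℂ)‖) ∧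
      ((-1 : ℂ) ^ (p + 1) / 2) *
          ∫ s in (-1 : ℝ)..ξ,
            Complex.exp (z / 2 * (ξ - s)) * (((derivative (radau p)).eval s : ℝ) : ℂ) =
        -Complex.exp (z / 2 * (ξ + 1)) +
          ((-1 : ℂ) ^ (p + 1) / 2) * ∑' k : ℕ, (z / 2) ^ k * (radauIter p k ξ : ℂ) := by
  set c : ℂ := z / 2 with hc
  -- bound on the radau polynomial
  obtain ⟨M, hM0, hM⟩ : ∃ M : ℝ, 0 ≤ M ∧ ∀ t ∈ Set.Icc (-1 : ℝ) 2, |(radau p).eval t| ≤ M := by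
    obtain ⟨M, hM⟩ := (isCompact_Icc (a := (-1:ℝ)) (b := 2)).exists_bound_of_continuousOn
      ((radau p).continuous_aeval.continuousOn)
    exact ⟨max M 0, le_max_right _ _, fun t ht =>
      (hM t ht).trans (le_max_left _ _)⟩
  have hIter := radauIter_bound p hM0 hM
  -- the summable majorant
  have hmaj : Summable (fun k : ℕ => M * (3 * ‖c‖) ^ k / k.factorial) := by
    have := Real.summable_pow_div_factorial (3 * ‖c‖)
    simpa [mul_div_assoc] using this.mul_left M
  have hbnd : ∀ k, ∀ t ∈ Set.Icc (-1 : ℝ) 2,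
      ‖c ^ k * (radauIter p k t : ℂ)‖ ≤ M * (3 * ‖c‖) ^ k / k.factorial := by
    intro k t ht
    rw [norm_mul, norm_pow, Complex.norm_real, Real.norm_eq_abs]
    have h1 : |radauIter p k t| ≤ M * (t + 1) ^ k / k.factorial := hIter k t ht
    have h2 : (t + 1) ^ k ≤ 3 ^ k := by
      apply pow_le_pow_left₀ (by linarith [ht.1]) (by linarith [ht.2])
    calc ‖c‖ ^ k * |radauIter p k t| ≤ ‖c‖ ^ k * (M * 3 ^ k / k.factorial) := by
          apply mul_le_mul_of_nonneg_left _ (by positivity)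
          exact h1.trans (by
            apply div_le_div_of_nonneg_right _ (by positivity)
            · exact mul_le_mul_of_nonneg_left h2 hM0)
      _ = M * (3 * ‖c‖) ^ k / k.factorial := by rw [mul_pow]; ring
  have hsum : ∀ t ∈ Set.Icc (-1 : ℝ) 2,
      Summable (fun k : ℕ => ‖c ^ k * (radauIter p k t : ℂ)‖) := fun t ht =>
    Summable.of_nonneg_of_le (fun k => norm_nonneg _) (fun k => hbnd k t ht) hmaj
  have hξ2 : ξ ∈ Set.Icc (-1 : ℝ) 2 := ⟨hξ.1, hξ.2.trans (by norm_num)⟩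
  refine ⟨hsum ξ hξ2, ?_⟩
  set Sc : ℝ → ℂ := fun t => ∑' k : ℕ, c ^ k * (radauIter p k t : ℂ) with hSc
  -- continuity of Sc on Icc (-1) 2
  have contSc : ContinuousOn Sc (Set.Icc (-1 : ℝ) 2) := by
    rw [continuousOn_iff_continuous_restrict]
    apply continuous_tsum
      (f := fun k (t : Set.Icc (-1:ℝ) 2) => c ^ k * (radauIter p k t : ℂ))
      (u := fun k => M * (3 * ‖c‖) ^ k / k.factorial)
    · intro k
      exact (continuous_const.mul
        ((Complex.continuous_ofReal.comp (radauIter_cont p k)).comp continuous_subtype_val))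
    · exact hmaj
    · intro k x; exact hbnd k x x.2
  -- the integral equation for Sc
  have eqn : ∀ t ∈ Set.Icc (-1 : ℝ) 2,
      Sc t = (((radau p).eval t : ℝ) : ℂ) + c * ∫ s in (-1 : ℝ)..t, Sc s := by
    intro t ht
    -- swap sum and integral
    have fk_cont : ∀ k : ℕ, Continuous fun s : ℝ => c ^ k * (radauIter p k s : ℂ) :=
      fun k => continuous_const.mul (Complex.continuous_ofReal.comp (radauIter_cont p k))
    set fk : ℕ → C(ℝ, ℂ) := fun k => ⟨fun s => c ^ k * (radauIter p k s : ℂ), fk_cont k⟩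
    have huIcc : Set.uIcc (-1 : ℝ) t ⊆ Set.Icc (-1 : ℝ) 2 := by
      rw [Set.uIcc_of_le ht.1]
      exact Set.Icc_subset_Icc le_rfl ht.2
    have hnorm : Summable fun k : ℕ =>
        ‖(fk k).restrict (⟨Set.uIcc (-1:ℝ) t, isCompact_uIcc⟩ : TopologicalSpace.Compacts ℝ)‖ := by
      apply Summable.of_nonneg_of_le (fun k => norm_nonneg _) _ hmaj
      intro k
      rw [ContinuousMap.norm_le _ (by positivity)]
      rintro ⟨x, hx⟩
      exact hbnd k x (huIcc hx)
    have hswap := intervalIntegral.tsum_intervalIntegral_eq_of_summable_norm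
      (a := (-1:ℝ)) (b := t) hnorm
    -- identify each interval integral
    have hterm : ∀ k : ℕ, (∫ s in (-1:ℝ)..t, fk k s) = c ^ k * (radauIter p (k+1) t : ℂ) := by
      intro k
      show (∫ s in (-1:ℝ)..t, c ^ k * (radauIter p k s : ℂ)) = _
      rw [intervalIntegral.integral_const_mul, intervalIntegral.integral_ofReal]
      rfl
    have hSct : ∀ s : ℝ, Sc s = ∑' k : ℕ, fk k s := fun s => rfl
    -- split off the first term of the tsum
    have hsummt : Summable fun k : ℕ => c ^ k * (radauIter p k t : ℂ) :=
      (hsum t ht).of_norm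
    have h0 : Sc t = (((radau p).eval t : ℝ) : ℂ)
        + ∑' k : ℕ, c ^ (k+1) * (radauIter p (k+1) t : ℂ) := by
      show (∑' k : ℕ, c ^ k * (radauIter p k t : ℂ)) = _
      rw [Summable.tsum_eq_zero_add hsummt]
      simp [radauIter]
    have h1 : (∑' k : ℕ, c ^ (k+1) * (radauIter p (k+1) t : ℂ))
        = c * ∑' k : ℕ, c ^ k * (radauIter p (k+1) t : ℂ) := by
      rw [← tsum_mul_left]
      congr 1; funext k; rw [pow_succ]; ring
    rw [h0, h1]
    congr 1
    have hre : (∫ s in (-1:ℝ)..t, Sc s) = ∫ s in (-1:ℝ)..t, ∑' k : ℕ, (fk k) s := rfl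
    rw [hre, ← hswap]
    exact congrArg (c * ·) (tsum_congr hterm).symm
  -- notation
  set Rc : ℝ → ℂ := fun t => (((radau p).eval t : ℝ) : ℂ) with hRc
  set Rc' : ℝ → ℂ := fun t => (((derivative (radau p)).eval t : ℝ) : ℂ) with hRc'
  set U : ℝ → ℂ := fun t => Rc t + c * ∫ s in (-1:ℝ)..t, Sc s with hU
  have intSc : ∀ t ∈ Set.Icc (-1:ℝ) 2, IntervalIntegrable Sc MeasureTheory.volume (-1) t := by
    intro t ht
    apply ContinuousOn.intervalIntegrable
    apply contSc.mono
    rw [Set.uIcc_of_le ht.1]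
    exact Set.Icc_subset_Icc le_rfl ht.2
  have contU : ContinuousOn U (Set.Icc (-1:ℝ) 1) := by
    apply ContinuousOn.add
    · exact (Complex.continuous_ofReal.comp (radau p).continuous_aeval).continuousOn
    · have hint : MeasureTheory.IntegrableOn Sc (Set.uIcc (-1:ℝ) 1) MeasureTheory.volume := by
        rw [Set.uIcc_of_le (by norm_num : (-1:ℝ) ≤ 1)]
        exact (contSc.mono (Set.Icc_subset_Icc le_rfl (by norm_num))).integrableOn_Icc
      have hprim := intervalIntegral.continuousOn_primitive_interval hint
      rw [Set.uIcc_of_le (by norm_num : (-1:ℝ) ≤ 1)] at hprim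
      exact hprim.const_smul c
  have hRd : ∀ t : ℝ, HasDerivAt Rc (Rc' t) t := by
    intro t
    exact ((radau p).hasDerivAt t).ofReal_comp
  have derivU : ∀ t ∈ Set.Ico (-1:ℝ) 1,
      HasDerivWithinAt U (Rc' t + c * U t) (Set.Ici t) t := by
    intro t ht
    have ht2 : t ∈ Set.Icc (-1:ℝ) 2 := ⟨ht.1, ht.2.le.trans (by norm_num)⟩
    have hmemIcc : Set.Icc t 2 ∈ nhdsWithin t (Set.Ioi t) :=
      Icc_mem_nhdsGT_of_mem ⟨le_rfl, by linarith [ht.2]⟩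
    have hmemBig : Set.Icc (-1:ℝ) 2 ∈ nhdsWithin t (Set.Ioi t) :=
      Filter.mem_of_superset hmemIcc (Set.Icc_subset_Icc ht2.1 le_rfl)
    have hmeas : StronglyMeasurableAtFilter Sc
        (nhdsWithin t (Set.Ioi t)) MeasureTheory.volume :=
      ⟨Set.Icc t 2, hmemIcc,
        ((contSc.mono (Set.Icc_subset_Icc ht2.1 le_rfl)).aestronglyMeasurable
          measurableSet_Icc)⟩
    have hcw : ContinuousWithinAt Sc (Set.Ioi t) t :=
      (contSc t ht2).mono_of_mem_nhdsWithin hmemBig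
    have hprim : HasDerivWithinAt (fun u => ∫ s in (-1:ℝ)..u, Sc s) (Sc t) (Set.Ici t) t :=
      intervalIntegral.integral_hasDerivWithinAt_right (intSc t ht2) hmeas hcw
    have hcomb := (hRd t).hasDerivWithinAt.add (hprim.const_mul c)
    have hsceq : Sc t = U t := eqn t ht2
    rw [← hsceq]
    exact hcomb
  -- the explicit solution g
  have f0c : Continuous (fun s : ℝ => Complex.exp (-(c * s)) * Rc' s) := by
    apply Continuous.mul
    · exact Complex.continuous_exp.comp
        ((continuous_const.mul Complex.continuous_ofReal).neg)
    · exact Complex.continuous_ofReal.comp (derivative (radau p)).continuous_aeval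
  set G : ℝ → ℂ := fun t => ∫ s in (-1:ℝ)..t, Complex.exp (-(c * s)) * Rc' s with hG
  set g : ℝ → ℂ := fun t => Complex.exp (c * (t + 1)) * Rc (-1)
      + Complex.exp (c * t) * G t with hg
  have hGd : ∀ t : ℝ, HasDerivAt G (Complex.exp (-(c * t)) * Rc' t) t := by
    intro t
    exact intervalIntegral.integral_hasDerivAt_right (f0c.intervalIntegrable _ _)
      f0c.aestronglyMeasurable.stronglyMeasurableAtFilter f0c.continuousAt
  have hOfReal : ∀ t : ℝ, HasDerivAt (fun x : ℝ => (x : ℂ)) 1 t := by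
    intro t
    exact (hasDerivAt_id t).ofReal_comp
  have derivg : ∀ t : ℝ, HasDerivAt g (Rc' t + c * g t) t := by
    intro t
    have inner1 : HasDerivAt (fun x : ℝ => c * ((x : ℂ) + 1)) c t := by
      simpa using ((hOfReal t).add_const (1:ℂ)).const_mul c
    have inner2 : HasDerivAt (fun x : ℝ => c * (x : ℂ)) c t := by
      simpa using (hOfReal t).const_mul c
    have h1 : HasDerivAt (fun x : ℝ => Complex.exp (c * ((x:ℂ) + 1)))
        (Complex.exp (c * ((t:ℂ) + 1)) * c) t := inner1.cexp
    have h2 : HasDerivAt (fun x : ℝ => Complex.exp (c * (x:ℂ)))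
        (Complex.exp (c * (t:ℂ)) * c) t := inner2.cexp
    have hd := (h1.mul_const (Rc (-1))).add (h2.mul (hGd t))
    have key : Complex.exp (c * (t:ℂ)) * (Complex.exp (-(c * t)) * Rc' t) = Rc' t := by
      rw [← mul_assoc, ← Complex.exp_add]
      simp
    refine HasDerivAt.congr_deriv (f := g) hd ?_
    rw [hg]
    simp only []
    linear_combination key
  have contg : ContinuousOn g (Set.Icc (-1:ℝ) 1) :=
    fun t _ => ((derivg t).continuousAt).continuousWithinAt
  have hinit : U (-1) = g (-1) := by
    rw [hU, hg, hG]
    simp only [intervalIntegral.integral_same, mul_zero, add_zero]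
    norm_num
  have hv : ∀ t : ℝ, LipschitzWith ‖c‖₊ (fun x : ℂ => Rc' t + c * x) := by
    intro t
    apply LipschitzWith.of_dist_le_mul
    intro x y
    simp only [dist_eq_norm]
    rw [show (Rc' t + c * x) - (Rc' t + c * y) = c * (x - y) by ring, norm_mul, coe_nnnorm]
  have huniq : Set.EqOn U g (Set.Icc (-1:ℝ) 1) :=
    ODE_solution_unique (v := fun t x => Rc' t + c * x) hv contU derivU contg
      (fun t _ => (derivg t).hasDerivWithinAt) hinit
  -- conclude
  have hScg : Sc ξ = g ξ := (eqn ξ hξ2).trans (huniq hξ)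
  have hInt : (∫ s in (-1:ℝ)..ξ,
      Complex.exp (c * (↑ξ - ↑s)) * (((derivative (radau p)).eval s : ℝ) : ℂ))
      = Complex.exp (c * ↑ξ) * G ξ := by
    rw [hG]
    rw [← intervalIntegral.integral_const_mul]
    congr 1
    funext s
    rw [show c * ((ξ:ℂ) - s) = c * ξ + -(c * s) by ring, Complex.exp_add, mul_assoc]
  have h1 : ((-1:ℂ) ^ (p+1) / 2) * (2 * (-1:ℂ) ^ (p+1)) = 1 := by
    have hsq : ((-1:ℂ)) ^ (p+1) * ((-1:ℂ)) ^ (p+1) = 1 := by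
      rw [← mul_pow]; norm_num
    field_simp
    linear_combination hsq
  have hRcneg : Rc (-1) = 2 * (-1:ℂ) ^ (p+1) := by
    rw [hRc]
    simp only [radau_eval_neg_one]
    push_cast
    ring
  rw [show (∑' k : ℕ, c ^ k * (radauIter p k ξ : ℂ)) = Sc ξ from rfl]
  rw [hInt, hScg, hg]
  simp only []
  rw [hRcneg]
  have heven : ((-1:ℂ)) ^ (p * 2) = 1 := by
    rw [mul_comm p 2, pow_mul]; norm_num
  linear_combination Complex.exp (c * ((ξ:ℂ) + 1)) * h1
    - 2 * Complex.exp (c * ((ξ:ℂ) + 1)) * heven
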